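/- Suppose in addition that F is nondecreasing with F(0) ≥ 0, that I(0) ≥ 0, and that I'(0) − I(0)·φ'(0) ≤ 1. Define V₀ : [0,∞) → ℝ by V₀(x) = I(x) − I(0)·φ(x). Then V₀ is concave on (0,∞), V₀'(x) ≤ 1 for all x > 0, and V₀ satisfies the Hamilton–Jacobi–Bellman equation: for every x > 0, (σ²/2)·V₀''(x) + μ·V₀'(x) − q·V₀(x) + F(x)·(1 − V₀'(x)) = 0. -/

import Mathlib

/-- with F nondecreasing, F(0) ≥ 0, I(0) ≥ 0 and
I'(0) − I(0)·φ'(0) ≤ 1, the function V₀(x) = I(x) − I(0)·φ(x) is concave on (0,∞),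
satisfies V₀' ≤ 1 on (0,∞), and solves the HJB equation
(σ²/2)V₀'' + μV₀' − qV₀ + F·(1 − V₀') = 0 on (0,∞). -/
theorem stmt_14 (μ σ q : ℝ) (hμ : 0 < μ) (hσ : 0 < σ) (hq : 0 < q)
    (F φ I : ℝ → ℝ)
    (hFmono : MonotoneOn F (Set.Ici 0)) (hF0 : 0 ≤ F 0)
    (hφC : ContDiff ℝ 2 φ) (hφ0 : φ 0 = 1)
    (hφ' : ∀ x ≥ (0:ℝ), deriv φ x < 0)
    (hφ'' : ∀ x ≥ (0:ℝ), 0 < deriv (deriv φ) x)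
    (hφODE : ∀ x > (0:ℝ),
      σ ^ 2 / 2 * deriv (deriv φ) x + (μ - F x) * deriv φ x - q * φ x = 0)
    (hIC : ContDiff ℝ 2 I)
    (hIconc : ∀ x ≥ (0:ℝ), deriv (deriv I) x ≤ 0)
    (hI' : ∀ x ≥ (0:ℝ), 0 ≤ deriv I x ∧ deriv I x ≤ 1)
    (hIODE : ∀ x > (0:ℝ),
      σ ^ 2 / 2 * deriv (deriv I) x + (μ - F x) * deriv I x - q * I x = -F x)
    (hI0 : 0 ≤ I 0) (hcond : deriv I 0 - I 0 * deriv φ 0 ≤ 1)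
    (V₀ : ℝ → ℝ) (hV₀ : ∀ x : ℝ, V₀ x = I x - I 0 * φ x) :
    ConcaveOn ℝ (Set.Ioi 0) V₀ ∧
      (∀ x > (0:ℝ), deriv (deriv V₀) x ≤ 0) ∧
      (∀ x > (0:ℝ), deriv V₀ x ≤ 1) ∧
      ∀ x > (0:ℝ),
        σ ^ 2 / 2 * deriv (deriv V₀) x + μ * deriv V₀ x - q * V₀ x
          + F x * (1 - deriv V₀ x) = 0 := by
  have hVfun : V₀ = fun x => I x - I 0 * φ x := funext hV₀
  have hId : Differentiable ℝ I := hIC.differentiable (by norm_num)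
  have hφd : Differentiable ℝ φ := hφC.differentiable (by norm_num)
  have hIC' : ContDiff ℝ 1 (deriv I) := by
    have := (contDiff_succ_iff_deriv.mp (show ContDiff ℝ (1+1) I by exact_mod_cast hIC)).2.2
    exact this
  have hφC' : ContDiff ℝ 1 (deriv φ) := by
    have := (contDiff_succ_iff_deriv.mp (show ContDiff ℝ (1+1) φ by exact_mod_cast hφC)).2.2
    exact this
  have hI'd : Differentiable ℝ (deriv I) := hIC'.differentiable one_ne_zero
  have hφ'd : Differentiable ℝ (deriv φ) := hφC'.differentiable one_ne_zero
  have hVd : Differentiable ℝ V₀ := by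
    rw [hVfun]; exact hId.sub (hφd.const_mul _)
  have hderiv : deriv V₀ = fun x => deriv I x - I 0 * deriv φ x := by
    rw [hVfun]; funext x
    rw [deriv_fun_sub (hId x) ((hφd x).const_mul _), deriv_const_mul _ (hφd x)]
  have hV'd : Differentiable ℝ (deriv V₀) := by
    rw [hderiv]; exact hI'd.sub (hφ'd.const_mul _)
  have hderiv2 : ∀ x : ℝ, deriv (deriv V₀) x = deriv (deriv I) x - I 0 * deriv (deriv φ) x := by
    intro x
    rw [hderiv, deriv_fun_sub (hI'd x) ((hφ'd x).const_mul _), deriv_const_mul _ (hφ'd x)]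
  have h2le : ∀ x ≥ (0:ℝ), deriv (deriv V₀) x ≤ 0 := by
    intro x hx
    rw [hderiv2]
    have := hIconc x hx
    have h2 := hφ'' x hx
    nlinarith
  refine ⟨?_, fun x hx => h2le x hx.le, ?_, ?_⟩
  · refine concaveOn_of_deriv2_nonpos (convex_Ioi 0) hVd.continuous.continuousOn
      hVd.differentiableOn hV'd.differentiableOn ?_
    intro x hx
    rw [interior_Ioi] at hx
    simpa [Function.iterate_succ, Function.iterate_zero] using h2le x (le_of_lt hx)
  · intro x hx
    have hanti : AntitoneOn (deriv V₀) (Set.Ici 0) := by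
      refine antitoneOn_of_deriv_nonpos (convex_Ici 0) hV'd.continuous.continuousOn
        hV'd.differentiableOn ?_
      intro y hy
      rw [interior_Ici] at hy
      exact h2le y hy.le
    have : deriv V₀ x ≤ deriv V₀ 0 :=
      hanti (Set.self_mem_Ici) (Set.mem_Ici.mpr hx.le) hx.le
    have h0 : deriv V₀ 0 = deriv I 0 - I 0 * deriv φ 0 := by rw [hderiv]
    linarith
  · intro x hx
    have h1 := hφODE x hx
    have h2 := hIODE x hx
    rw [hderiv2, hderiv, hV₀]
    ring_nf
    nlinarith [h1, h2]
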